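/- arXiv:2408.02515 — 2 statements merged into one kernel-verified Lean document; each statement's English description precedes it below -/
import Mathlib

section
/- Let ω : ℝ³ → ℝ be measurable, g ∈ L²(ℝ³,ℂ), λ, ω₀ ∈ ℝ, H_S = (ω₀/2)σ_z, and let G be a 2×2 complex Hermitian matrix. For f ∈ L²(ℝ³,ℂ) set α_t(f) = Re ∫ e^{itω(k)} conj(f(k)) g(k) dk, and suppose for each f there is a continuously differentiable U(f,·) : ℝ → M₂(ℂ) with U(f,0) = I and ∂_t U(f,t) = −i(H_S + λ·α_t(f)·G)·U(f,t). Let μ be a Borel probability measure on L²(ℝ³,ℂ) and let c ≥ 0 be such that ∫₀^∞ |α_t(f)| dt ≤ c for every f in the support of μ. Let γ₀ be a 2×2 positive semidefinite matrix of trace 1, assume f ↦ U(f,t) γ₀ U(f,t)* is Bochner integrable with respect to μ for each t, and set γ(t) = ∫ U(f,t) γ₀ U(f,t)* dμ(f). Then for every t ≥ 0, ‖γ(t) − exp(−it H_S) γ₀ exp(it H_S)‖ ≤ 2·c·‖G‖·|λ|, where ‖·‖ is the operator norm on M₂(ℂ). -/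
open MeasureTheory Complex Matrix Filter
open scoped Matrix.Norms.L2Operator ComplexOrder

noncomputable instance :
    MeasurableSpace (Lp ℂ 2 (volume : Measure (EuclideanSpace ℝ (Fin 3)))) := borel _

/-- The (topological) support of a measure: points all of whose neighbourhoods have
positive measure. -/
def MeasureTheory.Measure.supp {X : Type*} [TopologicalSpace X] [MeasurableSpace X]
    (μ : Measure X) : Set X := {x | ∀ V ∈ nhds x, 0 < μ V}

/-! ### Auxiliary lemmas -/

lemma aux_norm_diagonal_le {n : Type*} [Fintype n] [DecidableEq n]
    {v : n → ℂ} {M : ℝ} (hM : 0 ≤ M) (h : ∀ i, ‖v i‖ ≤ M) :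
    ‖Matrix.diagonal v‖ ≤ M := by
  rw [Matrix.l2_opNorm_def]
  refine ContinuousLinearMap.opNorm_le_bound _ hM fun x => ?_
  have h1 : ‖(Matrix.toEuclideanLin.trans LinearMap.toContinuousLinearMap (Matrix.diagonal v)) x‖
      = Real.sqrt (∑ i, ‖v i * x i‖ ^ 2) := by
    rw [EuclideanSpace.norm_eq]
    congr 1
    refine Finset.sum_congr rfl fun i _ => ?_
    congr 1
    show ‖(Matrix.diagonal v *ᵥ ⇑x) i‖ = _
    rw [Matrix.mulVec_diagonal]
  rw [h1, EuclideanSpace.norm_eq]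
  rw [← Real.sqrt_sq hM, ← Real.sqrt_mul (by positivity)]
  apply Real.sqrt_le_sqrt
  rw [Finset.mul_sum]
  refine Finset.sum_le_sum fun i _ => ?_
  rw [norm_mul, mul_pow]
  have h3 : ‖v i‖ ^ 2 ≤ M ^ 2 := pow_le_pow_left₀ (norm_nonneg _) (h i) 2
  have h2 : (0:ℝ) ≤ ‖x i‖ ^ 2 := by positivity
  exact mul_le_mul_of_nonneg_right h3 h2

lemma aux_norm_eq_one_of_star_mul_self {n : Type*} [Fintype n] [DecidableEq n] [Nonempty n]
    {A : Matrix n n ℂ} (h : Aᴴ * A = 1) : ‖A‖ = 1 := by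
  have h2 : ‖A‖ * ‖A‖ = 1 := by
    rw [← Matrix.l2_opNorm_conjTranspose_mul_self A, h, CStarRing.norm_one]
  rcases mul_self_eq_one_iff.mp h2 with h | h
  · exact h
  · nlinarith [norm_nonneg A]

lemma aux_norm_le_one_of_posSemidef_trace {n : Type*} [Fintype n] [DecidableEq n] [Nonempty n]
    {A : Matrix n n ℂ} (hA : A.PosSemidef) (htr : A.trace = 1) : ‖A‖ ≤ 1 := by
  classical
  have hH := hA.1
  set Uu : Matrix n n ℂ := (hH.eigenvectorUnitary : Matrix n n ℂ) with hUu
  set d : n → ℂ := RCLike.ofReal ∘ hH.eigenvalues with hd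
  have hspec : A = Uu * Matrix.diagonal d * Uuᴴ := by
    rw [← Matrix.star_eq_conjTranspose]; exact hH.spectral_theorem
  have hUstar : Uuᴴ * Uu = 1 := by
    rw [← Matrix.star_eq_conjTranspose]
    exact Unitary.coe_star_mul_self hH.eigenvectorUnitary
  have htrace : (∑ i, (hH.eigenvalues i : ℂ)) = 1 := by
    calc (∑ i, (hH.eigenvalues i : ℂ))
        = (Matrix.diagonal d : Matrix n n ℂ).trace := by
          simp [Matrix.trace, Matrix.diag, hd]
      _ = (Uu * Matrix.diagonal d * Uuᴴ).trace := by
          rw [Matrix.trace_mul_cycle, hUstar, Matrix.one_mul]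
      _ = A.trace := by rw [← hspec]
      _ = 1 := htr
  have hsum : (∑ i, hH.eigenvalues i) = 1 := by exact_mod_cast htrace
  have hev_le : ∀ i, hH.eigenvalues i ≤ 1 := by
    intro i
    rw [← hsum]
    exact Finset.single_le_sum (fun j _ => hA.eigenvalues_nonneg j) (Finset.mem_univ i)
  have hdiag : ‖(Matrix.diagonal d : Matrix n n ℂ)‖ ≤ 1 := by
    refine aux_norm_diagonal_le zero_le_one fun i => ?_
    simp only [hd, Function.comp_apply]
    rw [RCLike.norm_ofReal, abs_le]
    exact ⟨by linarith [hA.eigenvalues_nonneg i], hev_le i⟩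
  have hnU : ‖Uu‖ = 1 := aux_norm_eq_one_of_star_mul_self hUstar
  have hnUc : ‖Uuᴴ‖ = 1 := by rw [Matrix.l2_opNorm_conjTranspose, hnU]
  calc ‖A‖ = ‖Uu * Matrix.diagonal d * Uuᴴ‖ := by rw [← hspec]
    _ ≤ ‖Uu * Matrix.diagonal d‖ * ‖Uuᴴ‖ := Matrix.l2_opNorm_mul _ _
    _ ≤ ‖Uu‖ * ‖Matrix.diagonal d‖ * ‖Uuᴴ‖ := by
        have := Matrix.l2_opNorm_mul Uu (Matrix.diagonal d)
        nlinarith [norm_nonneg Uuᴴ]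
    _ ≤ 1 := by rw [hnU, hnUc]; nlinarith [norm_nonneg (Matrix.diagonal d : Matrix n n ℂ)]

lemma aux_integrable_conj_mul (g : EuclideanSpace ℝ (Fin 3) → ℂ)
    (hg : MemLp g 2 (volume : Measure (EuclideanSpace ℝ (Fin 3))))
    (f : Lp ℂ 2 (volume : Measure (EuclideanSpace ℝ (Fin 3)))) :
    Integrable (fun k => (starRingEnd ℂ) (f k) * g k) volume := by
  have h1 : Integrable (fun k => @inner ℂ _ _ (f k) ((hg.toLp g) k)) volume :=
    L2.integrable_inner (𝕜 := ℂ) f (hg.toLp g)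
  have h2 := hg.coeFn_toLp
  refine (integrable_congr ?_).mp h1
  filter_upwards [h2] with k hk
  rw [RCLike.inner_apply, hk, mul_comm]

lemma aux_alpha_continuous (ω : EuclideanSpace ℝ (Fin 3) → ℝ) (hω : Measurable ω)
    (g : EuclideanSpace ℝ (Fin 3) → ℂ)
    (hg : MemLp g 2 (volume : Measure (EuclideanSpace ℝ (Fin 3))))
    (f : Lp ℂ 2 (volume : Measure (EuclideanSpace ℝ (Fin 3)))) :
    Continuous (fun t : ℝ =>
      (∫ k, Complex.exp (I * (t : ℂ) * (ω k : ℂ)) * (starRingEnd ℂ) (f k) * g k).re) := by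
  have hgi := aux_integrable_conj_mul g hg f
  have hexp_norm : ∀ (t : ℝ) k, ‖Complex.exp (I * (t : ℂ) * (ω k : ℂ))‖ = 1 := by
    intro t k
    rw [Complex.norm_exp]
    have : (I * (t : ℂ) * (ω k : ℂ)).re = 0 := by simp
    rw [this, Real.exp_zero]
  have hcont : Continuous (fun t : ℝ =>
      ∫ k, Complex.exp (I * (t : ℂ) * (ω k : ℂ)) * ((starRingEnd ℂ) (f k) * g k)) := by
    apply continuous_of_dominated (bound := fun k => ‖(starRingEnd ℂ) (f k) * g k‖)
    · intro t
      apply AEStronglyMeasurable.mul ?_ hgi.1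
      apply Measurable.aestronglyMeasurable
      exact Complex.measurable_exp.comp
        ((measurable_const.mul (Complex.measurable_ofReal.comp hω)))
    · intro t
      filter_upwards with k
      rw [norm_mul, hexp_norm t k, one_mul]
    · exact hgi.norm
    · filter_upwards with k
      apply Continuous.mul ?_ continuous_const
      exact Complex.continuous_exp.comp
        ((continuous_const.mul Complex.continuous_ofReal).mul continuous_const)
  have : (fun t : ℝ => (∫ k, Complex.exp (I * (t : ℂ) * (ω k : ℂ))
      * (starRingEnd ℂ) (f k) * g k).re)
      = fun t : ℝ => (∫ k, Complex.exp (I * (t : ℂ) * (ω k : ℂ))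
        * ((starRingEnd ℂ) (f k) * g k)).re := by
    funext t
    congr 1
    exact integral_congr_ae (by filter_upwards with k using (mul_assoc _ _ _))
  rw [this]
  exact Complex.continuous_re.comp hcont

lemma aux_unitary (HS G : Matrix (Fin 2) (Fin 2) ℂ) (hHS : HSᴴ = HS) (hG : G.IsHermitian)
    (a : ℝ → ℝ) (U : ℝ → Matrix (Fin 2) (Fin 2) ℂ) (hU0 : U 0 = 1)
    (hU : ∀ t, HasDerivAt U ((-I) • ((HS + ((a t : ℝ) : ℂ) • G) * U t)) t) :
    ∀ t, (U t)ᴴ * (U t) = 1 := by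
  have hP : ∀ t, HasDerivAt (fun s => (U s)ᴴ * U s) 0 t := by
    intro t
    have h1 := ((hU t).star.mul (hU t))
    refine h1.congr_deriv (Eq.symm ?_)
    set H : Matrix (Fin 2) (Fin 2) ℂ := HS + ((a t : ℝ) : ℂ) • G with hH
    have hHerm : Hᴴ = H := by
      rw [hH, Matrix.conjTranspose_add, Matrix.conjTranspose_smul, hHS, hG.eq]
      congr 1
      rw [Complex.star_def, Complex.conj_ofReal]
    have hstar : star ((-I) • (H * U t)) = I • ((U t)ᴴ * H) := by
      show ((-I) • (H * U t))ᴴ = _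
      rw [Matrix.conjTranspose_smul, Matrix.conjTranspose_mul, hHerm]
      congr 1
      simp
    rw [hstar, smul_mul_assoc, mul_smul_comm]
    show (0:Matrix (Fin 2) (Fin 2) ℂ)
      = I • ((U t)ᴴ * H * U t) + (-I) • ((U t)ᴴ * (H * U t))
    rw [mul_assoc]
    simp
  have hconst : ∀ t, (U t)ᴴ * U t = (U 0)ᴴ * U 0 := by
    intro t
    have : (fun s => (U s)ᴴ * U s) t = (fun s => (U s)ᴴ * U s) 0 :=
      is_const_of_deriv_eq_zero (fun s => (hP s).differentiableAt)
        (fun s => (hP s).deriv) t 0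
    exact this
  intro t
  rw [hconst t, hU0]
  simp

lemma aux_key (HS G : Matrix (Fin 2) (Fin 2) ℂ) (hHS : HSᴴ = HS) (hG : G.IsHermitian)
    (a : ℝ → ℝ) (ha : Continuous a)
    (U : ℝ → Matrix (Fin 2) (Fin 2) ℂ) (hU0 : U 0 = 1)
    (hU : ∀ t, HasDerivAt U ((-I) • ((HS + ((a t : ℝ) : ℂ) • G) * U t)) t)
    (t : ℝ) (ht : 0 ≤ t) :
    ‖U t - NormedSpace.exp (t • ((-I) • HS))‖ ≤ ‖G‖ * ∫ s in (0:ℝ)..t, |a s| := by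
  set B : Matrix (Fin 2) (Fin 2) ℂ := (-I) • HS with hB
  set Bs : Matrix (Fin 2) (Fin 2) ℂ := I • HS with hBs
  have hBneg : Bs = -B := by rw [hB, hBs, neg_smul, neg_neg]
  have hee : (NormedSpace.exp : Matrix (Fin 2) (Fin 2) ℂ → Matrix (Fin 2) (Fin 2) ℂ)
      = NormedSpace.exp := rfl
  set V : ℝ → Matrix (Fin 2) (Fin 2) ℂ := fun s => NormedSpace.exp (s • B) with hV
  set Wm : ℝ → Matrix (Fin 2) (Fin 2) ℂ := fun s => NormedSpace.exp (s • Bs) with hWm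
  have hV' : ∀ s, HasDerivAt V (B * V s) s := by
    intro s
    have h := hasDerivAt_exp_smul_const' (𝕂 := ℝ) B s
    exact h
  have hW' : ∀ s, HasDerivAt Wm (Bs * Wm s) s := by
    intro s
    have h := hasDerivAt_exp_smul_const' (𝕂 := ℝ) Bs s
    exact h
  have hWV : ∀ s, Wm s * V s = 1 := by
    intro s
    have hcomm : Commute (s • Bs) (s • B) := by
      rw [hBneg]; exact (((Commute.refl B).neg_left).smul_left s).smul_right s
    rw [hWm, hV, ← Matrix.exp_add_of_commute _ _ hcomm]
    have : s • Bs + s • B = 0 := by rw [hBneg]; simp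
    rw [this, NormedSpace.exp_zero]
  have hVW : ∀ s, V s * Wm s = 1 := by
    intro s
    have hcomm : Commute (s • B) (s • Bs) := by
      rw [hBneg]; exact (((Commute.refl B).neg_right).smul_left s).smul_right s
    rw [hWm, hV, ← Matrix.exp_add_of_commute _ _ hcomm]
    have : s • B + s • Bs = 0 := by rw [hBneg]; simp
    rw [this, NormedSpace.exp_zero]
  have hVstar : ∀ s, (V s)ᴴ = Wm s := by
    intro s
    show star (V s) = Wm s
    rw [hV, NormedSpace.star_exp]
    congr 1
    rw [star_smul, star_trivial]
    congr 1
    show Bᴴ = Bs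
    rw [hB, Matrix.conjTranspose_smul, hHS, hBs]
    congr 1
    simp
  have hWstar : ∀ s, (Wm s)ᴴ = V s := by
    intro s
    have := hVstar s
    calc (Wm s)ᴴ = ((V s)ᴴ)ᴴ := by rw [this]
      _ = V s := Matrix.conjTranspose_conjTranspose _
  have hnV : ∀ s, ‖V s‖ = 1 := fun s =>
    aux_norm_eq_one_of_star_mul_self (by rw [hVstar]; exact hWV s)
  have hnW : ∀ s, ‖Wm s‖ = 1 := fun s =>
    aux_norm_eq_one_of_star_mul_self (by rw [hWstar]; exact hVW s)
  have hUnit := aux_unitary HS G hHS hG a U hU0 hU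
  have hnU : ∀ s, ‖U s‖ = 1 := fun s => aux_norm_eq_one_of_star_mul_self (hUnit s)
  have hUcont : Continuous U := continuous_iff_continuousAt.mpr fun s => (hU s).continuousAt
  have hWcont : Continuous Wm := continuous_iff_continuousAt.mpr fun s => (hW' s).continuousAt
  set m : ℝ → Matrix (Fin 2) (Fin 2) ℂ :=
    fun s => ((a s : ℝ) : ℂ) • ((-I) • (Wm s * (G * U s))) with hm
  have hmcont : Continuous m := by
    apply Continuous.smul (Complex.continuous_ofReal.comp ha)
    exact Continuous.const_smul (g := fun s => Wm s * (G * U s)) (hWcont.mul (continuous_const.mul hUcont)) (-I)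
  set Y : ℝ → Matrix (Fin 2) (Fin 2) ℂ := fun s => Wm s * (U s - V s) with hY
  have hcommW : ∀ s, HS * Wm s = Wm s * HS := by
    intro s
    have : Commute HS (s • Bs) := ((Commute.refl HS).smul_right I).smul_right s
    exact (this.exp_right)
  have hY' : ∀ s, HasDerivAt Y (m s) s := by
    intro s
    have h := (hW' s).mul ((hU s).sub (hV' s))
    refine h.congr_deriv (Eq.symm ?_)
    have hc : ∀ X : Matrix (Fin 2) (Fin 2) ℂ, HS * (Wm s * X) = Wm s * (HS * X) := by
      intro X
      rw [← mul_assoc, hcommW, mul_assoc]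
    rw [hm, hBs, hB]
    simp only [Pi.sub_apply, smul_mul_assoc, mul_smul_comm, add_mul, mul_add, mul_sub, sub_mul, smul_sub,
      smul_add, mul_assoc, neg_smul, neg_mul, mul_neg, smul_neg]
    simp only [hc]
    module
  have hInt : IntervalIntegrable m MeasureTheory.volume 0 t := hmcont.intervalIntegrable 0 t
  have hFTC : ∫ s in (0:ℝ)..t, m s = Y t - Y 0 :=
    intervalIntegral.integral_eq_sub_of_hasDerivAt (fun s _ => hY' s) hInt
  have hY0 : Y 0 = 0 := by
    rw [hY]
    simp only [hU0, hV, zero_smul, NormedSpace.exp_zero]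
    simp
  have hmnorm : ∀ s, ‖m s‖ ≤ ‖G‖ * |a s| := by
    intro s
    rw [hm]
    simp only
    rw [norm_smul, norm_smul]
    have h1 : ‖Wm s * (G * U s)‖ ≤ ‖G‖ := by
      calc ‖Wm s * (G * U s)‖ ≤ ‖Wm s‖ * ‖G * U s‖ := Matrix.l2_opNorm_mul _ _
        _ ≤ ‖Wm s‖ * (‖G‖ * ‖U s‖) := by
            have := Matrix.l2_opNorm_mul G (U s)
            nlinarith [norm_nonneg (Wm s)]
        _ = ‖G‖ := by rw [hnW, hnU]; ring
    have h2 : ‖(-I : ℂ)‖ = 1 := by simp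
    rw [h2, one_mul]
    have h3 : ‖((a s : ℝ) : ℂ)‖ = |a s| := by
      rw [Complex.norm_real, Real.norm_eq_abs]
    rw [h3]
    nlinarith [abs_nonneg (a s)]
  have hbound : ‖Y t‖ ≤ ‖G‖ * ∫ s in (0:ℝ)..t, |a s| := by
    calc ‖Y t‖ = ‖∫ s in (0:ℝ)..t, m s‖ := by rw [hFTC, hY0, sub_zero]
      _ ≤ ∫ s in (0:ℝ)..t, ‖m s‖ := intervalIntegral.norm_integral_le_integral_norm ht
      _ ≤ ∫ s in (0:ℝ)..t, ‖G‖ * |a s| := by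
          apply intervalIntegral.integral_mono_on ht (hmcont.norm.intervalIntegrable 0 t)
            ((continuous_const.mul ha.abs).intervalIntegrable 0 t)
          intro s _
          exact hmnorm s
      _ = ‖G‖ * ∫ s in (0:ℝ)..t, |a s| := by rw [intervalIntegral.integral_const_mul]
  have hUV : U t - V t = V t * Y t := by
    rw [hY, ← mul_assoc, hVW, one_mul]
  calc ‖U t - V t‖ = ‖V t * Y t‖ := by rw [hUV]
    _ ≤ ‖V t‖ * ‖Y t‖ := Matrix.l2_opNorm_mul _ _
    _ = ‖Y t‖ := by rw [hnV]; ring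
    _ ≤ _ := hbound

lemma aux_exp_facts (HS : Matrix (Fin 2) (Fin 2) ℂ) (hHS : HSᴴ = HS) (t : ℝ) :
    (NormedSpace.exp (t • ((-I) • HS)))ᴴ = NormedSpace.exp (t • (I • HS))
    ∧ NormedSpace.exp (t • (I • HS)) * NormedSpace.exp (t • ((-I) • HS)) = 1
    ∧ NormedSpace.exp (t • ((-I) • HS)) * NormedSpace.exp (t • (I • HS)) = 1 := by
  set B : Matrix (Fin 2) (Fin 2) ℂ := (-I) • HS with hB
  set Bs : Matrix (Fin 2) (Fin 2) ℂ := I • HS with hBs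
  have hBneg : Bs = -B := by rw [hB, hBs, neg_smul, neg_neg]
  refine ⟨?_, ?_, ?_⟩
  · show star (NormedSpace.exp (t • B)) = _
    rw [NormedSpace.star_exp]
    congr 1
    rw [star_smul, star_trivial]
    congr 1
    show Bᴴ = Bs
    rw [hB, Matrix.conjTranspose_smul, hHS, hBs]
    congr 1
    simp
  · have hcomm : Commute (t • Bs) (t • B) := by
      rw [hBneg]; exact (((Commute.refl B).neg_left).smul_left t).smul_right t
    rw [← Matrix.exp_add_of_commute _ _ hcomm]
    have : t • Bs + t • B = 0 := by rw [hBneg]; simp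
    rw [this, NormedSpace.exp_zero]
  · have hcomm : Commute (t • B) (t • Bs) := by
      rw [hBneg]; exact (((Commute.refl B).neg_right).smul_left t).smul_right t
    rw [← Matrix.exp_add_of_commute _ _ hcomm]
    have : t • B + t • Bs = 0 := by rw [hBneg]; simp
    rw [this, NormedSpace.exp_zero]

/-- **Stability of the free spin dynamics in the quasi-classical limit.**
If for each classical field configuration `f` the unitary `U(f,·)` solves
`∂ₜU(f,t) = −i(H_S + λ α_t(f) G) U(f,t)`, `U(f,0) = 1`, and `∫₀^∞ |α_t(f)| dt ≤ c` for every
`f` in the support of the probability measure `μ`, then the quasi-classical spin state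
`γ(t) = ∫ U(f,t) γ₀ U(f,t)* dμ(f)` satisfies
`‖γ(t) − e^{−itH_S} γ₀ e^{itH_S}‖ ≤ 2 c ‖G‖ |λ|` for all `t ≥ 0`. -/
theorem stability_of_free_dynamics
    (ω : EuclideanSpace ℝ (Fin 3) → ℝ) (hω_meas : Measurable ω)
    (g : EuclideanSpace ℝ (Fin 3) → ℂ)
    (hg : MemLp g 2 (volume : Measure (EuclideanSpace ℝ (Fin 3))))
    (lam ω₀ : ℝ)
    (HS : Matrix (Fin 2) (Fin 2) ℂ) (hHS : HS = ((ω₀ : ℂ) / 2) • !![1, 0; 0, -1])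
    (G : Matrix (Fin 2) (Fin 2) ℂ) (hG : G.IsHermitian)
    (α : Lp ℂ 2 (volume : Measure (EuclideanSpace ℝ (Fin 3))) → ℝ → ℝ)
    (hα : ∀ f t, α f t
      = (∫ k, Complex.exp (I * (t : ℂ) * (ω k : ℂ)) * (starRingEnd ℂ) (f k) * g k).re)
    (U : Lp ℂ 2 (volume : Measure (EuclideanSpace ℝ (Fin 3))) → ℝ
      → Matrix (Fin 2) (Fin 2) ℂ)
    (hU0 : ∀ f, U f 0 = 1)
    (hU : ∀ f t, HasDerivAt (U f)
      ((-I) • ((HS + (((lam * α f t : ℝ) : ℂ)) • G) * U f t)) t)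
    (μ : Measure (Lp ℂ 2 (volume : Measure (EuclideanSpace ℝ (Fin 3)))))
    [IsProbabilityMeasure μ]
    (c : ℝ) (hc0 : 0 ≤ c)
    (hc : ∀ f ∈ μ.supp, (∫⁻ t in Set.Ioi (0:ℝ), ENNReal.ofReal |α f t|) ≤ ENNReal.ofReal c)
    (γ₀ : Matrix (Fin 2) (Fin 2) ℂ) (hγ₀ : γ₀.PosSemidef) (htr : γ₀.trace = 1)
    (hint : ∀ t : ℝ, Integrable (fun f => U f t * γ₀ * (U f t)ᴴ) μ)
    (γ : ℝ → Matrix (Fin 2) (Fin 2) ℂ)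
    (hγ : ∀ t, γ t = ∫ f, U f t * γ₀ * (U f t)ᴴ ∂μ) :
    ∀ t : ℝ, 0 ≤ t →
      ‖γ t - NormedSpace.exp ((-(I * (t : ℂ))) • HS) * γ₀
          * NormedSpace.exp ((I * (t : ℂ)) • HS)‖
        ≤ 2 * c * ‖G‖ * |lam| := by
  -- Hermiticity of HS
  have hHSH : HSᴴ = HS := by
    rw [hHS, Matrix.conjTranspose_smul]
    congr 1
    · rw [Complex.star_def]
      simp [map_div₀, Complex.conj_ofReal, map_ofNat]
    · ext i j
      fin_cases i <;> fin_cases j <;> simp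
  intro t ht
  -- rewrite the exponentials
  have hsm1 : (-(I * (t : ℂ))) • HS = t • ((-I) • HS) := by
    rw [← smul_assoc]
    congr 1
    simp [Complex.real_smul]
    ring
  have hsm2 : (I * (t : ℂ)) • HS = t • (I • HS) := by
    rw [← smul_assoc]
    congr 1
    simp [Complex.real_smul]
    ring
  obtain ⟨hstar, hWV, hVW⟩ := aux_exp_facts HS hHSH t
  set V : Matrix (Fin 2) (Fin 2) ℂ := NormedSpace.exp (t • ((-I) • HS)) with hV
  set Wm : Matrix (Fin 2) (Fin 2) ℂ := NormedSpace.exp (t • (I • HS)) with hWm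
  rw [hsm1, hsm2]
  have hnV : ‖V‖ = 1 := aux_norm_eq_one_of_star_mul_self (by rw [hstar]; exact hWV)
  have hnWm : ‖Wm‖ = 1 := by rw [← hstar, Matrix.l2_opNorm_conjTranspose, hnV]
  have hγ₀n : ‖γ₀‖ ≤ 1 := aux_norm_le_one_of_posSemidef_trace hγ₀ htr
  -- pointwise bound on the support
  have hptwise : ∀ f ∈ μ.supp,
      ‖U f t * γ₀ * (U f t)ᴴ - V * γ₀ * Wm‖ ≤ 2 * c * ‖G‖ * |lam| := by
    intro f hf
    -- continuity of the coupling function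
    have hacont : Continuous (fun s => lam * α f s) := by
      have h1 : α f = (fun s : ℝ =>
          (∫ k, Complex.exp (I * (s : ℂ) * (ω k : ℂ)) * (starRingEnd ℂ) (f k) * g k).re) :=
        funext (hα f)
      exact continuous_const.mul (h1 ▸ aux_alpha_continuous ω hω_meas g hg f)
    -- key estimate
    have hkey := aux_key HS G hHSH hG (fun s => lam * α f s) hacont (U f) (hU0 f)
      (by intro s; exact hU f s) t ht
    -- bound the integral of |lam * α f s|
    have hint_a : ∫ s in (0:ℝ)..t, |lam * α f s| ≤ |lam| * c := by
      have hconta : Continuous (α f) := by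
        have h1 : α f = (fun s : ℝ =>
            (∫ k, Complex.exp (I * (s : ℂ) * (ω k : ℂ)) * (starRingEnd ℂ) (f k) * g k).re) :=
          funext (hα f)
        exact h1 ▸ aux_alpha_continuous ω hω_meas g hg f
      have h2 : ∫ s in (0:ℝ)..t, |lam * α f s| = |lam| * ∫ s in (0:ℝ)..t, |α f s| := by
        simp_rw [abs_mul]
        rw [intervalIntegral.integral_const_mul]
      rw [h2]
      have h3 : ∫ s in (0:ℝ)..t, |α f s| ≤ c := by
        rw [intervalIntegral.integral_of_le ht]
        have hmeas : AEStronglyMeasurable (fun s => |α f s|)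
            (volume.restrict (Set.Ioc (0:ℝ) t)) :=
          (hconta.abs).aestronglyMeasurable
        rw [integral_eq_lintegral_of_nonneg_ae
          (Filter.Eventually.of_forall fun s => abs_nonneg _) hmeas]
        refine ENNReal.toReal_le_of_le_ofReal hc0 ?_
        calc ∫⁻ s in Set.Ioc (0:ℝ) t, ENNReal.ofReal |α f s|
            ≤ ∫⁻ s in Set.Ioi (0:ℝ), ENNReal.ofReal |α f s| :=
              lintegral_mono_set Set.Ioc_subset_Ioi_self
          _ ≤ ENNReal.ofReal c := hc f hf
      have := abs_nonneg lam
      nlinarith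
    have hUVnorm : ‖U f t - V‖ ≤ ‖G‖ * (|lam| * c) := by
      refine hkey.trans ?_
      have hGn := norm_nonneg G
      nlinarith [hint_a]
    -- unitarity of U f t
    have hUnit := aux_unitary HS G hHSH hG (fun s => lam * α f s) (U f) (hU0 f)
      (by intro s; exact hU f s) t
    have hnU : ‖U f t‖ = 1 := aux_norm_eq_one_of_star_mul_self hUnit
    have hnUc : ‖(U f t)ᴴ‖ = 1 := by rw [Matrix.l2_opNorm_conjTranspose, hnU]
    -- decompose the difference
    have hdecomp : U f t * γ₀ * (U f t)ᴴ - V * γ₀ * Wm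
        = (U f t - V) * γ₀ * (U f t)ᴴ + V * γ₀ * ((U f t)ᴴ - Wm) := by
      rw [sub_mul, sub_mul, mul_sub]
      abel
    have hWU : (U f t)ᴴ - Wm = (U f t - V)ᴴ := by
      rw [Matrix.conjTranspose_sub, hstar]
    have hterm1 : ‖(U f t - V) * γ₀ * (U f t)ᴴ‖ ≤ ‖G‖ * (|lam| * c) := by
      calc ‖(U f t - V) * γ₀ * (U f t)ᴴ‖
          ≤ ‖(U f t - V) * γ₀‖ * ‖(U f t)ᴴ‖ := Matrix.l2_opNorm_mul _ _
        _ ≤ ‖U f t - V‖ * ‖γ₀‖ * ‖(U f t)ᴴ‖ := by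
            have := Matrix.l2_opNorm_mul (U f t - V) γ₀
            nlinarith [norm_nonneg ((U f t)ᴴ)]
        _ ≤ ‖G‖ * (|lam| * c) := by
            rw [hnUc, mul_one]
            have h0 := norm_nonneg (U f t - V)
            have h1 := norm_nonneg γ₀
            nlinarith [hUVnorm]
    have hterm2 : ‖V * γ₀ * ((U f t)ᴴ - Wm)‖ ≤ ‖G‖ * (|lam| * c) := by
      have hn2 : ‖(U f t)ᴴ - Wm‖ = ‖U f t - V‖ := by
        rw [hWU, Matrix.l2_opNorm_conjTranspose]
      calc ‖V * γ₀ * ((U f t)ᴴ - Wm)‖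
          ≤ ‖V * γ₀‖ * ‖(U f t)ᴴ - Wm‖ := Matrix.l2_opNorm_mul _ _
        _ ≤ ‖V‖ * ‖γ₀‖ * ‖(U f t)ᴴ - Wm‖ := by
            have := Matrix.l2_opNorm_mul V γ₀
            nlinarith [norm_nonneg ((U f t)ᴴ - Wm)]
        _ ≤ ‖G‖ * (|lam| * c) := by
            rw [hnV, one_mul, hn2]
            have h0 := norm_nonneg (U f t - V)
            have h1 := norm_nonneg γ₀
            nlinarith [hUVnorm]
    calc ‖U f t * γ₀ * (U f t)ᴴ - V * γ₀ * Wm‖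
        ≤ ‖(U f t - V) * γ₀ * (U f t)ᴴ‖ + ‖V * γ₀ * ((U f t)ᴴ - Wm)‖ := by
          rw [hdecomp]; exact norm_add_le _ _
      _ ≤ 2 * c * ‖G‖ * |lam| := by nlinarith [hterm1, hterm2]
  -- the complement of the support is null
  haveI : Fact ((2:ENNReal) ≠ ⊤) := ⟨by norm_num⟩
  have hnull : μ ((μ.supp)ᶜ) = 0 := by
    refine measure_null_of_locally_null _ fun x hx => ?_
    have hx' : ¬ ∀ V ∈ nhds x, 0 < μ V := hx
    push_neg at hx'
    obtain ⟨Vn, hVn, hVn0⟩ := hx'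
    refine ⟨Vn ∩ (μ.supp)ᶜ, ?_, ?_⟩
    · exact Filter.inter_mem (mem_nhdsWithin_of_mem_nhds hVn) self_mem_nhdsWithin
    · have h1 : μ (Vn ∩ (μ.supp)ᶜ) ≤ μ Vn := measure_mono Set.inter_subset_left
      have h2 : μ Vn = 0 := le_antisymm hVn0 (zero_le)
      exact le_antisymm (h2 ▸ h1) (zero_le)
  -- a.e. bound
  have hae : ∀ᵐ f ∂μ, ‖U f t * γ₀ * (U f t)ᴴ - V * γ₀ * Wm‖ ≤ 2 * c * ‖G‖ * |lam| := by
    rw [MeasureTheory.ae_iff]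
    refine measure_mono_null ?_ hnull
    intro f hf
    simp only [Set.mem_setOf_eq, not_le] at hf
    intro hsupp
    exact absurd (hptwise f hsupp) (not_le.mpr hf)
  -- assemble
  rw [hγ t]
  have hsub : (∫ f, U f t * γ₀ * (U f t)ᴴ ∂μ) - V * γ₀ * Wm
      = ∫ f, (U f t * γ₀ * (U f t)ᴴ - V * γ₀ * Wm) ∂μ := by
    rw [integral_sub (hint t) (integrable_const _), integral_const, probReal_univ, one_smul]
  rw [hsub]
  calc ‖∫ f, (U f t * γ₀ * (U f t)ᴴ - V * γ₀ * Wm) ∂μ‖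
      ≤ ∫ f, (2 * c * ‖G‖ * |lam|) ∂μ :=
        norm_integral_le_of_norm_le (integrable_const _) hae
    _ = 2 * c * ‖G‖ * |lam| := by
        rw [integral_const, probReal_univ, one_smul]
end

section
/- Let ω : ℝ³ → ℝ be measurable, g ∈ L²(ℝ³, ℂ), λ, ω₀ ∈ ℝ, and let G be a 2×2 complex matrix with σ_z·G·σ_z = −G (i.e. G is purely off-diagonal). For f ∈ L²(ℝ³,ℂ) set β_t(f) = Re ∫ e^{itω(k)} conj(f(k)) g(k) dk. Let γ₀ be a 2×2 complex matrix and suppose that for every f ∈ L²(ℝ³,ℂ) there is a continuously differentiable γ(f,·) : ℝ → M₂(ℂ) with γ(f,0) = γ₀ and ∂_t γ(f,t) = −i·[(ω₀/2)σ_z + √2·λ·β_t(f)·G , γ(f,t)] (matrix commutator). Let μ be a Borel probability measure on L²(ℝ³,ℂ) invariant under the map f ↦ −f, assume f ↦ γ(f,t) is Bochner integrable with respect to μ for each t, and set γ(t) = ∫ γ(f,t) dμ(f). Then: (a) if γ₀ is diagonal (its (1,2) and (2,1) entries vanish), then γ(t) is diagonal for all t ∈ ℝ; (b) if γ₀ is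 off-diagonal (its (1,1) and (2,2) entries vanish), then γ(t) is off-diagonal for all t ∈ ℝ. -/
open MeasureTheory Complex Matrix Filter
open scoped Matrix.Norms.L2Operator

instance : BorelSpace (Lp ℂ 2 (volume : Measure (EuclideanSpace ℝ (Fin 3)))) := ⟨rfl⟩

/-- Uniqueness for the commutator ODE `x' = -i[H(t), x]` with bounded `H`. -/
lemma comm_ode_uniq {H : ℝ → Matrix (Fin 2) (Fin 2) ℂ} {C : ℝ}
    (hC : ∀ s, ‖H s‖ ≤ C)
    {x y : ℝ → Matrix (Fin 2) (Fin 2) ℂ}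
    (hx : ∀ s, HasDerivAt x ((-I) • (H s * x s - x s * H s)) s)
    (hy : ∀ s, HasDerivAt y ((-I) • (H s * y s - y s * H s)) s)
    (h0 : x 0 = y 0) (t : ℝ) : x t = y t := by
  set v : ℝ → Matrix (Fin 2) (Fin 2) ℂ → Matrix (Fin 2) (Fin 2) ℂ :=
    fun s m => (-I) • (H s * m - m * H s) with hv
  have hCnn : 0 ≤ C := le_trans (norm_nonneg _) (hC 0)
  have hlip : ∀ s, LipschitzWith (2 * C).toNNReal (v s) := by
    intro s
    apply LipschitzWith.of_dist_le_mul
    intro a b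
    have : v s a - v s b = (-I) • (H s * (a - b) - (a - b) * H s) := by
      simp only [hv]; rw [← smul_sub]; congr 1; noncomm_ring
    rw [dist_eq_norm, dist_eq_norm, this]
    rw [norm_smul]
    have h1 : ‖H s * (a - b) - (a - b) * H s‖ ≤ 2 * C * ‖a - b‖ := by
      calc ‖H s * (a - b) - (a - b) * H s‖ ≤ ‖H s * (a - b)‖ + ‖(a - b) * H s‖ :=
            norm_sub_le _ _
        _ ≤ ‖H s‖ * ‖a - b‖ + ‖a - b‖ * ‖H s‖ := by
            gcongr <;> [exact norm_mul_le _ _; exact norm_mul_le _ _]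
        _ ≤ C * ‖a - b‖ + ‖a - b‖ * C := by gcongr <;> [exact hC s; exact hC s]
        _ = 2 * C * ‖a - b‖ := by ring
    calc ‖(-I : ℂ)‖ * ‖H s * (a - b) - (a - b) * H s‖
        = ‖H s * (a - b) - (a - b) * H s‖ := by simp
      _ ≤ 2 * C * ‖a - b‖ := h1
      _ = ((2 * C).toNNReal : ℝ) * ‖a - b‖ := by
          rw [Real.coe_toNNReal _ (by positivity)]
  have key := ODE_solution_unique_of_mem_Icc
    (v := v) (s := fun _ => (Set.univ : Set (Matrix (Fin 2) (Fin 2) ℂ)))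
    (K := (2 * C).toNNReal) (a := -(|t| + 1)) (b := |t| + 1) (t₀ := 0)
    (fun s _ => (hlip s).lipschitzOnWith)
    (by constructor <;> [linarith [abs_nonneg t]; linarith [abs_nonneg t]])
    (fun s _ => (hx s).continuousAt.continuousWithinAt)
    (fun s _ => hx s) (fun _ _ => Set.mem_univ _)
    (fun s _ => (hy s).continuousAt.continuousWithinAt)
    (fun s _ => hy s) (fun _ _ => Set.mem_univ _) h0
  exact key ⟨by linarith [neg_abs_le t, abs_nonneg t], by linarith [le_abs_self t]⟩

/-- Extracting a matrix entry from a Bochner integral of matrices. -/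
lemma matrix_integral_apply {α : Type*} [MeasurableSpace α] (ν : Measure α)
    (F : α → Matrix (Fin 2) (Fin 2) ℂ) (hF : Integrable F ν) (i j : Fin 2) :
    (∫ a, F a ∂ν) i j = ∫ a, F a i j ∂ν := by
  let L : Matrix (Fin 2) (Fin 2) ℂ →L[ℂ] ℂ :=
    LinearMap.toContinuousLinearMap
      { toFun := fun A => A i j, map_add' := fun _ _ => rfl, map_smul' := fun _ _ => rfl }
  exact (L.integral_comp_comm hF).symm

/-- Conjugating a commutator by an involution. -/
lemma conj_comm_matrix (S P X : Matrix (Fin 2) (Fin 2) ℂ) (hS : S * S = 1) :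
    S * ((-I) • (P * X - X * P)) * S
      = (-I) • ((S * P * S) * (S * X * S) - (S * X * S) * (S * P * S)) := by
  have h1 : ∀ A B : Matrix (Fin 2) (Fin 2) ℂ, (S * A * S) * (S * B * S) = S * (A * B) * S := by
    intro A B
    calc (S * A * S) * (S * B * S) = S * A * (S * S) * (B * S) := by
          simp only [mul_assoc]
      _ = S * (A * B) * S := by rw [hS]; simp only [mul_assoc, one_mul]
  rw [h1, h1, Matrix.mul_smul, Matrix.smul_mul]
  congr 1
  rw [Matrix.mul_sub, Matrix.sub_mul]

/-- **Symmetry of the quasi-classical dynamics for off-diagonal couplings.**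
If `σ_z G σ_z = −G`, the measure `μ` describing the classical reservoir state is invariant
under `f ↦ −f`, and for every `f` the matrix `γ(f,t)` solves the commutator equation
`∂ₜγ(f,t) = −i[(ω₀/2)σ_z + √2 λ β_t(f) G, γ(f,t)]` with `γ(f,0) = γ₀`, then the averaged
state `γ(t) = ∫ γ(f,t) dμ(f)` stays diagonal if `γ₀` is diagonal, and stays off-diagonal if
`γ₀` is off-diagonal. -/
theorem quasiclassical_diagonal_offdiagonal_decoupling
    (ω : EuclideanSpace ℝ (Fin 3) → ℝ) (hω_meas : Measurable ω)
    (g : EuclideanSpace ℝ (Fin 3) → ℂ)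
    (hg : MemLp g 2 (volume : Measure (EuclideanSpace ℝ (Fin 3))))
    (lam ω₀ : ℝ)
    (σz : Matrix (Fin 2) (Fin 2) ℂ) (hσz : σz = !![1, 0; 0, -1])
    (G : Matrix (Fin 2) (Fin 2) ℂ) (hGoff : σz * G * σz = -G)
    (β : Lp ℂ 2 (volume : Measure (EuclideanSpace ℝ (Fin 3))) → ℝ → ℝ)
    (hβ : ∀ f t, β f t
      = (∫ k, Complex.exp (I * (t : ℂ) * (ω k : ℂ)) * (starRingEnd ℂ) (f k) * g k).re)
    (γ₀ : Matrix (Fin 2) (Fin 2) ℂ)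
    (γf : Lp ℂ 2 (volume : Measure (EuclideanSpace ℝ (Fin 3))) → ℝ
      → Matrix (Fin 2) (Fin 2) ℂ)
    (hγf0 : ∀ f, γf f 0 = γ₀)
    (hγf : ∀ f t, HasDerivAt (γf f)
      ((-I) • ((((ω₀ : ℂ) / 2) • σz + (((Real.sqrt 2 * lam * β f t : ℝ) : ℂ)) • G) * γf f t
        - γf f t * (((ω₀ : ℂ) / 2) • σz + (((Real.sqrt 2 * lam * β f t : ℝ) : ℂ)) • G))) t)
    (hC1 : ∀ f, Continuous (deriv (γf f)))
    (μ : Measure (Lp ℂ 2 (volume : Measure (EuclideanSpace ℝ (Fin 3)))))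
    [IsProbabilityMeasure μ]
    (hμinv : Measure.map (fun f => -f) μ = μ)
    (hint : ∀ t : ℝ, Integrable (fun f => γf f t) μ) :
    ((γ₀ 0 1 = 0 ∧ γ₀ 1 0 = 0) →
      ∀ t : ℝ, (∫ f, γf f t ∂μ) 0 1 = 0 ∧ (∫ f, γf f t ∂μ) 1 0 = 0) ∧
    ((γ₀ 0 0 = 0 ∧ γ₀ 1 1 = 0) →
      ∀ t : ℝ, (∫ f, γf f t ∂μ) 0 0 = 0 ∧ (∫ f, γf f t ∂μ) 1 1 = 0) := by
  -- σz is an involution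
  have hσzσz : σz * σz = 1 := by
    subst hσz
    ext i j
    fin_cases i <;> fin_cases j <;>
      simp [Matrix.mul_apply, Fin.sum_univ_two, Matrix.one_apply]
  -- the Hamiltonian
  set Hm : Lp ℂ 2 (volume : Measure (EuclideanSpace ℝ (Fin 3))) → ℝ
      → Matrix (Fin 2) (Fin 2) ℂ :=
    fun f t => ((ω₀ : ℂ) / 2) • σz + (((Real.sqrt 2 * lam * β f t : ℝ) : ℂ)) • G with hHm
  -- uniform bound on |β f t|
  set M : Lp ℂ 2 (volume : Measure (EuclideanSpace ℝ (Fin 3))) → ℝ :=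
    fun f => ∫ k, ‖(starRingEnd ℂ) (f k) * g k‖ with hM
  have hβbd : ∀ f t, |β f t| ≤ M f := by
    intro f t
    rw [hβ]
    calc |(∫ k, Complex.exp (I * (t : ℂ) * (ω k : ℂ)) * (starRingEnd ℂ) (f k) * g k).re|
        ≤ ‖∫ k, Complex.exp (I * (t : ℂ) * (ω k : ℂ)) * (starRingEnd ℂ) (f k) * g k‖ :=
          Complex.abs_re_le_norm _
      _ ≤ ∫ k, ‖Complex.exp (I * (t : ℂ) * (ω k : ℂ)) * (starRingEnd ℂ) (f k) * g k‖ :=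
          norm_integral_le_integral_norm _
      _ = M f := by
          rw [hM]
          refine integral_congr_ae (Filter.Eventually.of_forall fun k => ?_)
          have hexp : ‖Complex.exp (I * (t : ℂ) * (ω k : ℂ))‖ = 1 := by
            rw [Complex.norm_exp]
            have h0 : (I * (t : ℂ) * (ω k : ℂ)).re = 0 := by simp
            rw [h0, Real.exp_zero]
          show ‖Complex.exp (I * (t : ℂ) * (ω k : ℂ)) * (starRingEnd ℂ) (f k) * g k‖
            = ‖(starRingEnd ℂ) (f k) * g k‖
          rw [mul_assoc, norm_mul, hexp, one_mul]
  -- β is odd in f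
  have hβneg : ∀ f t, β (-f) t = -(β f t) := by
    intro f t
    rw [hβ, hβ, ← Complex.neg_re, ← integral_neg]
    congr 1
    refine integral_congr_ae ?_
    filter_upwards [Lp.coeFn_neg f] with k hk
    rw [hk]
    simp [mul_assoc]
  -- conjugating the Hamiltonian by σz flips the sign of f
  have hconjH : ∀ f t, σz * Hm (-f) t * σz = Hm f t := by
    intro f t
    rw [hHm]
    simp only
    rw [Matrix.mul_add, Matrix.add_mul, Matrix.mul_smul, Matrix.smul_mul,
      Matrix.mul_smul, Matrix.smul_mul, hGoff]
    have h1 : σz * σz * σz = σz := by rw [hσzσz, one_mul]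
    rw [h1, hβneg]
    congr 1
    rw [smul_neg, ← neg_smul]
    congr 1
    push_cast
    ring
  -- bound on the Hamiltonian
  have hHbd : ∀ f t, ‖Hm f t‖ ≤ |ω₀| / 2 * ‖σz‖ + (Real.sqrt 2 * |lam| * |M f| + 1) * ‖G‖ := by
    intro f t
    rw [hHm]
    simp only
    calc ‖((ω₀ : ℂ) / 2) • σz + (((Real.sqrt 2 * lam * β f t : ℝ) : ℂ)) • G‖
        ≤ ‖((ω₀ : ℂ) / 2) • σz‖ + ‖(((Real.sqrt 2 * lam * β f t : ℝ) : ℂ)) • G‖ :=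
          norm_add_le _ _
      _ ≤ |ω₀| / 2 * ‖σz‖ + (Real.sqrt 2 * |lam| * |M f| + 1) * ‖G‖ := by
          rw [norm_smul, norm_smul]
          gcongr
          · have he : ((ω₀ : ℂ) / 2) = (((ω₀ / 2 : ℝ)) : ℂ) := by push_cast; ring
            rw [he, Complex.norm_real, Real.norm_eq_abs, abs_div]
            simp
          · rw [Complex.norm_real, Real.norm_eq_abs, abs_mul, abs_mul,
              _root_.abs_of_nonneg (Real.sqrt_nonneg 2)]
            have h3 : |β f t| ≤ |M f| := le_trans (hβbd f t) (le_abs_self _)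
            have h4 : (0:ℝ) ≤ Real.sqrt 2 * |lam| := by positivity
            have h2 : Real.sqrt 2 * |lam| * |β f t| ≤ Real.sqrt 2 * |lam| * |M f| := by
              rw [mul_assoc, mul_assoc]
              exact mul_le_mul_of_nonneg_left (mul_le_mul_of_nonneg_left h3 (abs_nonneg lam))
                (Real.sqrt_nonneg 2)
            linarith
  -- the key symmetry: γf f t and ±σz γf(-f) t σz solve the same ODE
  have hkey : ∀ (ε : ℂ), ε = 1 ∨ ε = -1 → σz * γ₀ * σz = ε • γ₀ →
      ∀ f t, γf f t = ε • (σz * γf (-f) t * σz) := by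
    intro ε hε hinit f t
    set y : ℝ → Matrix (Fin 2) (Fin 2) ℂ := fun s => ε • (σz * γf (-f) s * σz) with hy
    have hε2 : ε * ε = 1 := by rcases hε with h | h <;> subst h <;> ring
    have hy0 : γf f 0 = y 0 := by
      rw [hy]
      simp only
      rw [hγf0, hγf0, hinit, smul_smul, hε2, one_smul]
    have hyderiv : ∀ s, HasDerivAt y ((-I) • (Hm f s * y s - y s * Hm f s)) s := by
      intro s
      have hd := (hγf (-f) s).const_mul σz
      have hd2 := hd.mul_const σz
      have hd3 := hd2.const_smul ε
      have heq : ε • (σz * ((-I) • (Hm (-f) s * γf (-f) s - γf (-f) s * Hm (-f) s)) * σz)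
          = (-I) • (Hm f s * y s - y s * Hm f s) := by
        rw [conj_comm_matrix σz (Hm (-f) s) (γf (-f) s) hσzσz, hconjH, hy]
        simp only
        rw [smul_comm ε (-I)]
        congr 1
        rw [smul_sub, Matrix.mul_smul, Matrix.smul_mul]
      rw [← heq]
      convert hd3 using 1 <;> rfl
    exact comm_ode_uniq (H := Hm f)
      (C := |ω₀| / 2 * ‖σz‖ + (Real.sqrt 2 * |lam| * |M f| + 1) * ‖G‖)
      (hHbd f) (hγf f) hyderiv hy0 t
  -- σz-conjugation formulas for entries
  have hentry : ∀ (X : Matrix (Fin 2) (Fin 2) ℂ),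
      (σz * X * σz) 0 0 = X 0 0 ∧ (σz * X * σz) 1 1 = X 1 1 ∧
      (σz * X * σz) 0 1 = -(X 0 1) ∧ (σz * X * σz) 1 0 = -(X 1 0) := by
    intro X
    subst hσz
    refine ⟨?_, ?_, ?_, ?_⟩ <;>
      · simp [Matrix.mul_apply, Matrix.vecMul, dotProduct, Fin.sum_univ_two]
        try ring
  -- measurability of f ↦ -f
  have hnegmeas : Measurable (fun f : Lp ℂ 2 (volume : Measure (EuclideanSpace ℝ (Fin 3)))
      => -f) := continuous_neg.measurable
  -- main integral symmetry argument (entrywise)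
  have hmain : ∀ (t : ℝ) (i j : Fin 2),
      (∀ f, γf f t i j = -(γf (-f) t i j)) → (∫ f, γf f t ∂μ) i j = 0 := by
    intro t i j hrel
    rw [matrix_integral_apply μ _ (hint t) i j]
    have hAS : AEStronglyMeasurable (fun f => γf f t i j) μ := by
      have hcont : Continuous (fun A : Matrix (Fin 2) (Fin 2) ℂ => A i j) :=
        (LinearMap.toContinuousLinearMap
          { toFun := fun A : Matrix (Fin 2) (Fin 2) ℂ => A i j,
            map_add' := fun _ _ => rfl, map_smul' := fun _ _ => rfl } :
          Matrix (Fin 2) (Fin 2) ℂ →L[ℂ] ℂ).continuous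
      exact hcont.comp_aestronglyMeasurable (hint t).aestronglyMeasurable
    have hswitch : ∫ f, γf f t i j ∂μ = ∫ f, γf (-f) t i j ∂μ := by
      conv_lhs => rw [← hμinv]
      rw [integral_map hnegmeas.aemeasurable (hμinv.symm ▸ hAS)]
    have : ∫ f, γf f t i j ∂μ = -(∫ f, γf f t i j ∂μ) := by
      calc ∫ f, γf f t i j ∂μ = ∫ f, -(γf (-f) t i j) ∂μ :=
            integral_congr_ae (Filter.Eventually.of_forall fun f => hrel f)
        _ = -(∫ f, γf (-f) t i j ∂μ) := integral_neg _
        _ = -(∫ f, γf f t i j ∂μ) := by rw [← hswitch]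
    linear_combination this / 2
  constructor
  · -- diagonal case: ε = 1
    rintro ⟨h01, h10⟩ t
    have hinit : σz * γ₀ * σz = (1 : ℂ) • γ₀ := by
      rw [one_smul]
      ext i j
      obtain ⟨e00, e11, e01, e10⟩ := hentry γ₀
      fin_cases i <;> fin_cases j <;> simp only [Fin.zero_eta, Fin.mk_one]
      · exact e00
      · rw [e01, h01, neg_zero]
      · rw [e10, h10, neg_zero]
      · exact e11
    have hrel := hkey 1 (Or.inl rfl) hinit
    constructor
    · refine hmain t 0 1 fun f => ?_
      obtain ⟨_, _, e01, _⟩ := hentry (γf (-f) t)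
      rw [hrel f t, one_smul, e01]
    · refine hmain t 1 0 fun f => ?_
      obtain ⟨_, _, _, e10⟩ := hentry (γf (-f) t)
      rw [hrel f t, one_smul, e10]
  · -- off-diagonal case: ε = -1
    rintro ⟨h00, h11⟩ t
    have hinit : σz * γ₀ * σz = (-1 : ℂ) • γ₀ := by
      ext i j
      obtain ⟨e00, e11, e01, e10⟩ := hentry γ₀
      rw [Matrix.smul_apply, neg_one_smul]
      fin_cases i <;> fin_cases j <;> simp only [Fin.zero_eta, Fin.mk_one]
      · rw [e00, h00, neg_zero]
      · exact e01
      · exact e10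
      · rw [e11, h11, neg_zero]
    have hrel := hkey (-1) (Or.inr rfl) hinit
    constructor
    · refine hmain t 0 0 fun f => ?_
      obtain ⟨e00, _, _, _⟩ := hentry (γf (-f) t)
      rw [hrel f t]
      simp only [neg_one_smul, Matrix.neg_apply]
      rw [e00]
    · refine hmain t 1 1 fun f => ?_
      obtain ⟨_, e11, _, _⟩ := hentry (γf (-f) t)
      rw [hrel f t]
      simp only [neg_one_smul, Matrix.neg_apply]
      rw [e11]
end
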